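/- Let (g, φ) be a quadratic Lie algebra over a field K of characteristic zero. Then the socle (sum of all minimal nonzero ideals of g) and the Jacobson radical (intersection of all maximal proper ideals of g) are mutual orthogonal complements: (Soc g)^⊥ = J(g). -/

import Mathlib

/-- The orthogonal complement `{x ∈ L : φ(x,u) = 0 for all u ∈ U}` of a subspace `U`
relative to a bilinear form `φ`. -/
def perp {K L : Type*} [Field K] [AddCommGroup L] [Module K L]
    (φ : L →ₗ[K] L →ₗ[K] K) (U : Submodule K L) : Submodule K L where
  carrier := {x | ∀ u ∈ U, φ x u = 0}
  add_mem' := by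
    intro a b ha hb u hu
    simp [map_add, ha u hu, hb u hu]
  zero_mem' := by
    intro u hu
    simp
  smul_mem' := by
    intro c a ha u hu
    simp [map_smul, ha u hu]

set_option linter.unusedSectionVars false
section Aux

variable {K : Type*} [Field K]
    {L : Type*} [LieRing L] [LieAlgebra K L] [FiniteDimensional K L]
    (φ : L →ₗ[K] L →ₗ[K] K)

theorem mem_perp_iff (U : Submodule K L) (x : L) :
    x ∈ perp φ U ↔ ∀ u ∈ U, φ x u = 0 := Iff.rfl

theorem perp_eq_orthogonal (hsymm : ∀ x y : L, φ x y = φ y x) (U : Submodule K L) :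
    perp φ U = LinearMap.BilinForm.orthogonal φ U := by
  ext x
  constructor
  · intro hx u hu
    rw [hsymm]
    exact hx u hu
  · intro hx u hu
    rw [hsymm]
    exact hx u hu

theorem perp_perp (hsymm : ∀ x y : L, φ x y = φ y x)
    (hnondeg : ∀ x : L, (∀ y : L, φ x y = 0) → x = 0)
    (U : Submodule K L) : perp φ (perp φ U) = U := by
  rw [perp_eq_orthogonal φ hsymm, perp_eq_orthogonal φ hsymm]
  exact LinearMap.BilinForm.orthogonal_orthogonal
    ((LinearMap.IsRefl.nondegenerate_iff_separatingLeft (B := φ) (fun x y h => by rw [hsymm]; exact h)).mpr hnondeg)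
    (fun x y h => by rw [hsymm]; exact h) U

theorem perp_top (hnondeg : ∀ x : L, (∀ y : L, φ x y = 0) → x = 0) :
    perp φ (⊤ : Submodule K L) = ⊥ := by
  rw [eq_bot_iff]
  intro x hx
  exact hnondeg x (fun y => hx y trivial)

theorem perp_bot : perp φ (⊥ : Submodule K L) = ⊤ := by
  rw [eq_top_iff]
  intro x _ u hu
  rw [Submodule.mem_bot] at hu
  simp [hu]

theorem perp_antitone {U V : Submodule K L} (h : U ≤ V) : perp φ V ≤ perp φ U :=
  fun _ hx u hu => hx u (h hu)

/-- The perp of a Lie ideal is a Lie ideal. -/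
def perpIdeal (hinv : ∀ x y z : L, φ ⁅x, y⁆ z = φ x ⁅y, z⁆)
    (I : LieIdeal K L) : LieIdeal K L where
  toSubmodule := perp φ (LieSubmodule.toSubmodule I)
  lie_mem := by
    intro x m hm u hu
    have h1 : φ ⁅x, m⁆ u = - φ ⁅m, x⁆ u := by
      rw [← lie_skew m x, map_neg, LinearMap.neg_apply]
      simp
    rw [h1, hinv m x u, hm ⁅x, u⁆ (I.lie_mem hu)]
    simp

theorem coe_perpIdeal (hinv : ∀ x y z : L, φ ⁅x, y⁆ z = φ x ⁅y, z⁆) (I : LieIdeal K L) :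
    (LieSubmodule.toSubmodule (perpIdeal φ hinv I)) = perp φ (LieSubmodule.toSubmodule I) := rfl

theorem perpIdeal_perpIdeal (hsymm : ∀ x y : L, φ x y = φ y x)
    (hnondeg : ∀ x : L, (∀ y : L, φ x y = 0) → x = 0)
    (hinv : ∀ x y z : L, φ ⁅x, y⁆ z = φ x ⁅y, z⁆) (I : LieIdeal K L) :
    perpIdeal φ hinv (perpIdeal φ hinv I) = I := by
  rw [← LieSubmodule.toSubmodule_inj, coe_perpIdeal φ hinv, coe_perpIdeal φ hinv,
    perp_perp φ hsymm hnondeg]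

theorem perpIdeal_antitone (hinv : ∀ x y z : L, φ ⁅x, y⁆ z = φ x ⁅y, z⁆)
    {I J : LieIdeal K L} (h : I ≤ J) :
    perpIdeal φ hinv J ≤ perpIdeal φ hinv I := by
  rw [← LieSubmodule.toSubmodule_le_toSubmodule] at h ⊢
  exact perp_antitone φ h

theorem perpIdeal_bot (hinv : ∀ x y z : L, φ ⁅x, y⁆ z = φ x ⁅y, z⁆) : perpIdeal φ hinv (⊥ : LieIdeal K L) = ⊤ := by
  rw [← LieSubmodule.toSubmodule_inj, coe_perpIdeal φ hinv, LieSubmodule.bot_toSubmodule,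
    perp_bot, LieSubmodule.top_toSubmodule]

theorem perpIdeal_top (hnondeg : ∀ x : L, (∀ y : L, φ x y = 0) → x = 0)
    (hinv : ∀ x y z : L, φ ⁅x, y⁆ z = φ x ⁅y, z⁆) : perpIdeal φ hinv (⊤ : LieIdeal K L) = ⊥ := by
  rw [← LieSubmodule.toSubmodule_inj, coe_perpIdeal φ hinv, LieSubmodule.top_toSubmodule,
    perp_top φ hnondeg, LieSubmodule.bot_toSubmodule]

theorem perpIdeal_minimal_of_maximal (hsymm : ∀ x y : L, φ x y = φ y x)
    (hnondeg : ∀ x : L, (∀ y : L, φ x y = 0) → x = 0)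
    (hinv : ∀ x y z : L, φ ⁅x, y⁆ z = φ x ⁅y, z⁆) {M : LieIdeal K L}
    (hM : M ≠ ⊤ ∧ ∀ J : LieIdeal K L, M ≤ J → J = M ∨ J = ⊤) :
    perpIdeal φ hinv M ≠ ⊥ ∧
      ∀ J : LieIdeal K L, J ≤ perpIdeal φ hinv M → J = ⊥ ∨ J = perpIdeal φ hinv M := by
  constructor
  · intro h
    apply hM.1
    have := congrArg (perpIdeal φ hinv) h
    rwa [perpIdeal_perpIdeal φ hsymm hnondeg hinv, perpIdeal_bot φ hinv] at this
  · intro J hJ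
    have h2 : M ≤ perpIdeal φ hinv J := by
      have := perpIdeal_antitone φ hinv hJ
      rwa [perpIdeal_perpIdeal φ hsymm hnondeg hinv] at this
    rcases hM.2 _ h2 with h | h
    · right
      have := congrArg (perpIdeal φ hinv) h
      rwa [perpIdeal_perpIdeal φ hsymm hnondeg hinv] at this
    · left
      have := congrArg (perpIdeal φ hinv) h
      rwa [perpIdeal_perpIdeal φ hsymm hnondeg hinv, perpIdeal_top φ hnondeg hinv] at this

theorem perpIdeal_maximal_of_minimal (hsymm : ∀ x y : L, φ x y = φ y x)
    (hnondeg : ∀ x : L, (∀ y : L, φ x y = 0) → x = 0)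
    (hinv : ∀ x y z : L, φ ⁅x, y⁆ z = φ x ⁅y, z⁆) {I : LieIdeal K L}
    (hI : I ≠ ⊥ ∧ ∀ J : LieIdeal K L, J ≤ I → J = ⊥ ∨ J = I) :
    perpIdeal φ hinv I ≠ ⊤ ∧
      ∀ J : LieIdeal K L, perpIdeal φ hinv I ≤ J → J = perpIdeal φ hinv I ∨ J = ⊤ := by
  constructor
  · intro h
    apply hI.1
    have := congrArg (perpIdeal φ hinv) h
    rwa [perpIdeal_perpIdeal φ hsymm hnondeg hinv, perpIdeal_top φ hnondeg hinv] at this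
  · intro J hJ
    have h2 : perpIdeal φ hinv J ≤ I := by
      have := perpIdeal_antitone φ hinv hJ
      rwa [perpIdeal_perpIdeal φ hsymm hnondeg hinv] at this
    rcases hI.2 _ h2 with h | h
    · right
      have := congrArg (perpIdeal φ hinv) h
      rwa [perpIdeal_perpIdeal φ hsymm hnondeg hinv, perpIdeal_bot φ hinv] at this
    · left
      have := congrArg (perpIdeal φ hinv) h
      rwa [perpIdeal_perpIdeal φ hsymm hnondeg hinv] at this

theorem perp_sSup (S : Set (Submodule K L)) :
    perp φ (sSup S) = sInf {perp φ U | U ∈ S} := by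
  have key : ∀ x : L, ∀ U : Submodule K L, (x ∈ perp φ U ↔ U ≤ LinearMap.ker (φ x)) := by
    intro x U
    constructor
    · intro hx u hu; exact hx u hu
    · intro h u hu; exact h hu
  ext x
  rw [key x, sSup_le_iff, Submodule.mem_sInf]
  constructor
  · rintro h _ ⟨U, hU, rfl⟩
    exact (key x U).mpr (h U hU)
  · intro h U hU
    exact (key x U).mp (h _ ⟨U, hU, rfl⟩)

end Aux

/-- In a quadratic Lie algebra, the socle (the sum of all minimal nonzero ideals) and the
Jacobson radical (the intersection of all maximal proper ideals) are mutual orthogonal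
complements: `(Soc g)^⊥ = J(g)`. -/
theorem perp_socle_eq_jacobson_radical
    {K : Type*} [Field K] [CharZero K]
    {L : Type*} [LieRing L] [LieAlgebra K L] [FiniteDimensional K L]
    (φ : L →ₗ[K] L →ₗ[K] K)
    (hsymm : ∀ x y : L, φ x y = φ y x)
    (hnondeg : ∀ x : L, (∀ y : L, φ x y = 0) → x = 0)
    (hinv : ∀ x y z : L, φ ⁅x, y⁆ z = φ x ⁅y, z⁆) :
    perp φ (LieSubmodule.toSubmodule
        (sSup {I : LieIdeal K L | I ≠ ⊥ ∧ ∀ J : LieIdeal K L, J ≤ I → J = ⊥ ∨ J = I}))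
      = LieSubmodule.toSubmodule
          (sInf {M : LieIdeal K L | M ≠ ⊤ ∧ ∀ J : LieIdeal K L, M ≤ J → J = M ∨ J = ⊤}) := by
  set Smin := {I : LieIdeal K L | I ≠ ⊥ ∧ ∀ J : LieIdeal K L, J ≤ I → J = ⊥ ∨ J = I}
  set Smax := {M : LieIdeal K L | M ≠ ⊤ ∧ ∀ J : LieIdeal K L, M ≤ J → J = M ∨ J = ⊤}
  rw [LieSubmodule.sSup_toSubmodule, LieSubmodule.sInf_toSubmodule,
    perp_sSup]
  congr 1
  ext U
  constructor
  · rintro ⟨_, ⟨I, hI, rfl⟩, rfl⟩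
    exact ⟨perpIdeal φ hinv I, perpIdeal_maximal_of_minimal φ hsymm hnondeg hinv hI, rfl⟩
  · rintro ⟨M, hM, rfl⟩
    refine ⟨LieSubmodule.toSubmodule (perpIdeal φ hinv M),
      ⟨perpIdeal φ hinv M, perpIdeal_minimal_of_maximal φ hsymm hnondeg hinv hM, rfl⟩, ?_⟩
    rw [← coe_perpIdeal φ hinv, perpIdeal_perpIdeal φ hsymm hnondeg hinv]
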